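/- arXiv:1704.01836 — 3 statements merged into one kernel-verified Lean document; each statement's English description precedes it below -/
import Mathlib

section
/- Let X be a pure k-dimensional simplicial complex and let S be an independent set of X with |S| ≥ k. Define Y^S indexed by k-subsets of V by (Y^S)_{F,F'} = (L↓_{k-1})_{F,F'} if F ∪ F' ⊆ S and 0 otherwise. Then Y^S is positive semidefinite, ⟨Y^S, I⟩ = k·binom(|S|, k), and ⟨Y^S, L↓_{k-1}⟩ = k·binom(|S|, k)·|S|. -/
open Finset Matrix

/-- The oriented incidence number `[F:K]` induced by the global linear order on
the vertices: it is `(-1)^j` if `K ⊆ F`, `F ∖ K = {x_j}` and `x_j` is the `j`-th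
smallest element of `F`, and `0` otherwise. -/
def inc {V : Type} [DecidableEq V] [LinearOrder V] (F K : Finset V) : ℝ :=
  if K ⊆ F ∧ F.card = K.card + 1 then
    ∑ x ∈ F \ K, (-1 : ℝ) ^ (K.filter (fun y => y < x)).card
  else 0

/-- An abstract simplicial complex on a vertex type `V`: a family of finite subsets
of `V` closed under taking subsets. -/
structure SC (V : Type) [DecidableEq V] where
  faces : Finset (Finset V)
  down_closed : ∀ ⦃F⦄, F ∈ faces → ∀ ⦃K : Finset V⦄, K ⊆ F → K ∈ faces

variable {V : Type} [Fintype V] [DecidableEq V] [LinearOrder V]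

/-- The faces of cardinality `m` (i.e. of dimension `m-1`) of a complex. -/
def SC.dfaces (X : SC V) (m : ℕ) : Finset (Finset V) := X.faces.filter fun F => F.card = m

/-- The faces of cardinality `m`, as a type (index set of the space `C^{m-1}` of
`(m-1)`-dimensional cochains). -/
abbrev Face (X : SC V) (m : ℕ) := {F : Finset V // F ∈ X.dfaces m}

/-- The matrix of the coboundary map `δ_{m-1}` from `(m-1)`-dimensional cochains
(functions on cardinality-`m` faces) to `m`-dimensional cochains, in the bases of
elementary cochains. -/
def deltaMat (X : SC V) (m : ℕ) : Matrix (Face X (m + 1)) (Face X m) ℝ :=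
  fun H F => inc H.1 F.1

/-- The up-Laplacian `L↑_{m-1} = ∂_m δ_{m-1}` acting on `(m-1)`-dimensional cochains,
where `∂ = δ*` is the adjoint (transpose) of the coboundary map. -/
def Lup (X : SC V) (m : ℕ) : Matrix (Face X m) (Face X m) ℝ :=
  (deltaMat X m)ᵀ * deltaMat X m

/-- The down-Laplacian `L↓_m = δ_{m-1} ∂_m` acting on `m`-dimensional cochains. -/
def Ldown (X : SC V) (m : ℕ) : Matrix (Face X (m + 1)) (Face X (m + 1)) ℝ :=
  deltaMat X m * (deltaMat X m)ᵀ

/-- The space of harmonicSp `i`-cochains `H_i = Z_i ∩ Z^i = ker ∂_i ∩ ker δ_i`. -/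
def harmonicSp (X : SC V) (i : ℕ) : Submodule ℝ (Face X (i + 1) → ℝ) :=
  LinearMap.ker (Matrix.mulVecLin (deltaMat X i)ᵀ) ⊓
    LinearMap.ker (Matrix.mulVecLin (deltaMat X (i + 1)))

/-- The type of all `k`-element subsets of `V`. -/
abbrev KSet (V : Type) [Fintype V] [DecidableEq V] (k : ℕ) := {F : Finset V // F.card = k}

/-- `ε_{F,F'} = [F : F ∩ F'] ⬝ [F' : F ∩ F']`. -/
def eps {V : Type} [DecidableEq V] [LinearOrder V] (F F' : Finset V) : ℝ :=
  inc F (F ∩ F') * inc F' (F ∩ F')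

/-- The down-Laplacian `L↓_{k-1}` of the complete complex `K_n^k`, as a matrix indexed
by all `k`-subsets of the vertex set: diagonal entries `k`, off-diagonal entries
`ε_{F,F'}` (which vanish unless `|F ∩ F'| = k-1`). -/
def Lc (V : Type) [Fintype V] [DecidableEq V] [LinearOrder V] (k : ℕ) :
    Matrix (KSet V k) (KSet V k) ℝ :=
  fun F F' => if F = F' then (k : ℝ) else eps F.1 F'.1

/-- `S` is an independent set of the pure `k`-dimensional complex `X`: it contains
no `k`-dimensional face of `X`. -/
def SC.IsIndep (X : SC V) (k : ℕ) (S : Finset V) : Prop :=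
  ∀ H ∈ X.dfaces (k + 1), ¬ H ⊆ S

/-- The independence number `α(X)` of a pure `k`-dimensional complex. -/
noncomputable def alphaNum (X : SC V) (k : ℕ) : ℕ :=
  sSup {m | ∃ S : Finset V, X.IsIndep k S ∧ S.card = m}

/-- `X` is a pure `k`-dimensional simplicial complex: all faces have dimension at
most `k` and every face is contained in a face of dimension `k`. -/
def SC.Pure (X : SC V) (k : ℕ) : Prop :=
  (∀ F ∈ X.faces, F.card ≤ k + 1) ∧ ∀ F ∈ X.faces, ∃ H ∈ X.dfaces (k + 1), F ⊆ H

/-- Feasibility for the primal semidefinite program defining `ϑ_k(X)`. -/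
def thetaFeasible (X : SC V) (k : ℕ) (Y : Matrix (KSet V k) (KSet V k) ℝ) : Prop :=
  Y.PosSemidef ∧ Matrix.trace Y = 1 ∧
  (∀ F F' : KSet V k, F.1 ∪ F'.1 ∈ X.dfaces (k + 1) → Y F F' = 0) ∧
  (∀ F F' : KSet V k, k + 2 ≤ (F.1 ∪ F'.1).card → Y F F' = 0) ∧
  (∀ F F' G G' : KSet V k, F.1 ∪ F'.1 = G.1 ∪ G'.1 →
    eps F.1 F'.1 * Y F F' = eps G.1 G'.1 * Y G G')

/-- The theta number `ϑ_k(X)` of a pure `k`-dimensional simplicial complex: the optimal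
value of the semidefinite program maximizing `⟨L↓_{k-1}, Y⟩` over feasible `Y`. -/
noncomputable def theta (X : SC V) (k : ℕ) : ℝ :=
  sSup {t | ∃ Y, thetaFeasible X k Y ∧ Matrix.trace (Lc V k * Y) = t}

/-- The complete `k`-dimensional complex on the vertex type `V`: all subsets of
cardinality at most `k+1` are faces. -/
def completeComplex (V : Type) [Fintype V] [DecidableEq V] (k : ℕ) : SC V :=
  ⟨univ.filter fun F => F.card ≤ k + 1, by
    intro F hF K hK
    simp only [mem_filter, mem_univ, true_and] at hF ⊢
    exact le_trans (card_le_card hK) hF⟩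

/-- The empty complex (no faces at all), conventionally pure of any dimension. -/
def emptyComplex (V : Type) [DecidableEq V] : SC V :=
  ⟨∅, by intro F hF; simp at hF⟩

/-- The largest eigenvalue of a matrix. -/
noncomputable def lambdaMax {ι : Type} [Fintype ι] (M : Matrix ι ι ℝ) : ℝ :=
  sSup {μ : ℝ | Module.End.HasEigenvalue (Matrix.mulVecLin M) μ}

/-- The smallest eigenvalue of a matrix. -/
noncomputable def lambdaMin {ι : Type} [Fintype ι] (M : Matrix ι ι ℝ) : ℝ :=
  sInf {μ : ℝ | Module.End.HasEigenvalue (Matrix.mulVecLin M) μ}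

/-- The degree of a face `F`: the number of faces of one higher dimension containing it. -/
def SC.deg (X : SC V) (F : Finset V) : ℕ :=
  ((X.dfaces (F.card + 1)).filter fun H => F ⊆ H).card

/-- The minimal degree of a `(k-1)`-dimensional face (a face of cardinality `k`). -/
noncomputable def degMin (X : SC V) (k : ℕ) : ℕ :=
  sInf {m | ∃ F ∈ X.dfaces k, m = X.deg F}

/-- The up-Laplacian `L↑_{k-1}(X)` extended by zeros to a matrix indexed by all
`k`-subsets of the vertex set. -/
def LupE (X : SC V) (k : ℕ) : Matrix (KSet V k) (KSet V k) ℝ :=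
  fun F F' => ∑ H ∈ X.dfaces (k + 1), inc H F.1 * inc H F'.1

/-- The down-Laplacian `L↓_{k-1}(X)` extended by zeros to a matrix indexed by all
`k`-subsets of the vertex set. -/
def LdownE (X : SC V) (k : ℕ) : Matrix (KSet V k) (KSet V k) ℝ :=
  fun F F' =>
    if F.1 ∈ X.faces ∧ F'.1 ∈ X.faces then ∑ K ∈ X.dfaces (k - 1), inc F.1 K * inc F'.1 K
    else 0

/-- The Lovász theta number of a graph given by an adjacency relation `adj` on a finite
vertex type, in its primal formulation. -/
noncomputable def thetaG {W : Type} [Fintype W] (adj : W → W → Prop) : ℝ :=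
  sSup {t | ∃ Z : Matrix W W ℝ, Z.PosSemidef ∧ Matrix.trace Z = 1 ∧
    (∀ v w, adj v w → Z v w = 0) ∧ t = ∑ v, ∑ w, Z v w}

section AuxIndep

set_option linter.unusedSectionVars false

namespace AuxIndep

variable {V : Type} [Fintype V] [DecidableEq V] [LinearOrder V]

lemma inc_eq_zero {F K : Finset V} (h : ¬ (K ⊆ F ∧ F.card = K.card + 1)) : inc F K = 0 :=
  if_neg h

lemma inc_ne_zero {F K : Finset V} (h : inc F K ≠ 0) : K ⊆ F ∧ F.card = K.card + 1 := by
  by_contra hc; exact h (inc_eq_zero hc)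

lemma inc_sq {F K : Finset V} (hKF : K ⊆ F) (hc : F.card = K.card + 1) :
    (inc F K) ^ 2 = 1 := by
  have h1 : (F \ K).card = 1 := by rw [card_sdiff_of_subset hKF, hc]; omega
  obtain ⟨x, hx⟩ := card_eq_one.mp h1
  rw [inc, if_pos ⟨hKF, hc⟩, hx, sum_singleton, ← pow_mul, mul_comm, pow_mul]
  norm_num

lemma eps_comm (F F' : Finset V) : eps F F' = eps F' F := by
  rw [eps, eps, inter_comm F' F, mul_comm]

lemma eps_sq {k : ℕ} (hk : 1 ≤ k) {F F' : Finset V} (hF : F.card = k) (hF' : F'.card = k) :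
    (eps F F') ^ 2 = if (F ∩ F').card = k - 1 then 1 else 0 := by
  by_cases h : (F ∩ F').card = k - 1
  · rw [if_pos h, eps, mul_pow, inc_sq inter_subset_left (by omega),
      inc_sq inter_subset_right (by omega), one_mul]
  · rw [if_neg h, eps, inc_eq_zero (fun hc => h (by omega)), zero_mul]
    norm_num

lemma sum_inc_mul {k : ℕ} (hk : 1 ≤ k) {F F' : Finset V} (hF : F.card = k) (hF' : F'.card = k) :
    ∑ K : Finset V, (if K.card = k - 1 then inc F K * inc F' K else 0) =
      if F = F' then (k : ℝ) else eps F F' := by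
  by_cases hFF : F = F'
  · subst hFF
    rw [if_pos rfl]
    rw [← Finset.sum_subset (Finset.subset_univ (F.powersetCard (k - 1)))
      (fun K _ hK => ?_)]
    · rw [Finset.sum_congr rfl (fun K hK => ?_), Finset.sum_const, nsmul_eq_mul,
        mul_one, card_powersetCard, hF]
      · norm_cast
        rw [← Nat.choose_symm (by omega : k - 1 ≤ k), Nat.sub_sub_self hk, Nat.choose_one_right]
      · rw [mem_powersetCard] at hK
        rw [if_pos hK.2, ← sq, inc_sq hK.1 (by omega)]
    · by_cases hc : K.card = k - 1
      · rw [if_pos hc, inc_eq_zero (fun hh => hK (mem_powersetCard.mpr ⟨hh.1, hc⟩)), zero_mul]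
      · exact if_neg hc
  · rw [if_neg hFF]
    have hlt : (F ∩ F').card < k := by
      rcases lt_or_eq_of_le (le_trans (card_le_card (inter_subset_left : F ∩ F' ⊆ F)) hF.le) with h | h
      · exact h
      · exfalso
        have h1 : F ∩ F' = F := eq_of_subset_of_card_le inter_subset_left (by omega)
        have h2 : F ∩ F' = F' := eq_of_subset_of_card_le inter_subset_right (by omega)
        exact hFF (h1 ▸ h2)
    by_cases hI : (F ∩ F').card = k - 1
    · rw [Finset.sum_eq_single (F ∩ F') (fun K _ hK => ?_) (by simp)]
      · rw [if_pos hI]; rfl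
      · by_cases hc : K.card = k - 1
        · rw [if_pos hc]
          by_contra h0
          obtain ⟨h1, h2⟩ := mul_ne_zero_iff.mp h0
          have hs : K ⊆ F ∩ F' := subset_inter (inc_ne_zero h1).1 (inc_ne_zero h2).1
          exact hK (eq_of_subset_of_card_le hs (by omega))
        · exact if_neg hc
    · have heps : eps F F' = 0 := by
        rw [eps, inc_eq_zero (fun hc => hI (by omega)), zero_mul]
      rw [heps]
      refine Finset.sum_eq_zero (fun K _ => ?_)
      by_cases hc : K.card = k - 1
      · rw [if_pos hc]
        by_contra h0
        obtain ⟨h1, h2⟩ := mul_ne_zero_iff.mp (fun hh => h0 (by rw [hh]))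
        have hs : K ⊆ F ∩ F' := subset_inter (inc_ne_zero h1).1 (inc_ne_zero h2).1
        have := card_le_card hs
        omega
      · exact if_neg hc

lemma Lc_apply (k : ℕ) (F F' : KSet V k) :
    Lc V k F F' = if F.1 = F'.1 then (k : ℝ) else eps F.1 F'.1 := by
  simp only [Lc]
  exact if_congr Subtype.ext_iff rfl rfl

lemma Lc_comm (k : ℕ) (F F' : KSet V k) : Lc V k F F' = Lc V k F' F := by
  rw [Lc_apply, Lc_apply]
  by_cases h : F.1 = F'.1
  · rw [if_pos h, if_pos h.symm]
  · rw [if_neg h, if_neg (fun hh => h hh.symm), eps_comm]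

lemma filter_powersetCard (k : ℕ) (S : Finset V) :
    (Finset.univ.powersetCard k).filter (fun G => G ⊆ S) = S.powersetCard k := by
  ext G
  simp only [mem_filter, mem_powersetCard, subset_univ, true_and]
  exact and_comm

lemma sum_indicator (k : ℕ) (S : Finset V) (c : ℝ) :
    ∑ F : KSet V k, (if F.1 ⊆ S then c else 0) = (S.card.choose k : ℝ) * c := by
  rw [← Finset.sum_subtype (Finset.univ.powersetCard k)
      (fun x => by simp [mem_powersetCard]) (fun G => if G ⊆ S then c else 0),
    ← Finset.sum_filter, filter_powersetCard, Finset.sum_const, card_powersetCard,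
    nsmul_eq_mul]

lemma card_adj {k : ℕ} (hk : 1 ≤ k) {S F : Finset V} (hFS : F ⊆ S) (hF : F.card = k) :
    ((S.powersetCard k).filter (fun F' => (F ∩ F').card = k - 1)).card = k * (S.card - k) := by
  have key : (F ×ˢ (S \ F)).card =
      ((S.powersetCard k).filter (fun F' => (F ∩ F').card = k - 1)).card := by
    refine Finset.card_bij (fun p _ => insert p.2 (F.erase p.1)) ?_ ?_ ?_
    · rintro ⟨x, y⟩ hp
      simp only [mem_product, mem_sdiff] at hp
      have hx := hp.1
      have hyS := hp.2.1
      have hyF := hp.2.2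
      have hye : y ∉ F.erase x := fun h => hyF (mem_of_mem_erase h)
      have hFe : F ∩ insert y (F.erase x) = F.erase x := by
        ext a
        simp only [mem_inter, mem_insert, mem_erase]
        constructor
        · rintro ⟨haF, rfl | h⟩
          · exact absurd haF hyF
          · exact h
        · rintro ⟨hax, haF⟩
          exact ⟨haF, Or.inr ⟨hax, haF⟩⟩
      simp only [mem_filter, mem_powersetCard]
      refine ⟨⟨?_, ?_⟩, ?_⟩
      · intro a ha
        rcases mem_insert.mp ha with rfl | h
        · exact hyS
        · exact hFS (mem_of_mem_erase h)
      · rw [card_insert_of_notMem hye, card_erase_of_mem hx, hF]; omega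
      · rw [hFe, card_erase_of_mem hx, hF]
    · rintro ⟨x, y⟩ hp ⟨x', y'⟩ hp' heq
      simp only [mem_product, mem_sdiff] at hp hp'
      have heq : insert y (F.erase x) = insert y' (F.erase x') := heq
      have hy : y = y' := by
        have hmem : y ∈ insert y' (F.erase x') := heq ▸ mem_insert_self y (F.erase x)
        rcases mem_insert.mp hmem with h | h
        · exact h
        · exact absurd (mem_of_mem_erase h) hp.2.2
      subst hy
      have h1 : F.erase x = F.erase x' := by
        have h2 := congrArg (fun s : Finset V => s.erase y) heq
        simpa [Finset.erase_insert (fun h => hp.2.2 (mem_of_mem_erase h)),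
          Finset.erase_insert (fun h => hp'.2.2 (mem_of_mem_erase h))] using h2
      have hxx : x = x' := by
        by_contra hne
        have hxm : x ∈ F.erase x' := mem_erase.mpr ⟨hne, hp.1⟩
        rw [← h1] at hxm
        exact (notMem_erase x F) hxm
      simp [hxx]
    · intro F' hF'm
      simp only [mem_filter, mem_powersetCard] at hF'm
      obtain ⟨⟨hF'S, hF'c⟩, hIc⟩ := hF'm
      have h1 : (F \ F').card = 1 := by
        have := Finset.card_sdiff_add_card_inter F F'
        omega
      have h2 : (F' \ F).card = 1 := by
        have := Finset.card_sdiff_add_card_inter F' F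
        rw [inter_comm] at this
        omega
      obtain ⟨x, hx⟩ := card_eq_one.mp h1
      obtain ⟨y, hy⟩ := card_eq_one.mp h2
      have hxiff : ∀ a : V, a ∈ F ∧ a ∉ F' ↔ a = x := by
        intro a; rw [← mem_sdiff, hx, mem_singleton]
      have hyiff : ∀ a : V, a ∈ F' ∧ a ∉ F ↔ a = y := by
        intro a; rw [← mem_sdiff, hy, mem_singleton]
      have hxF : x ∈ F ∧ x ∉ F' := (hxiff x).mpr rfl
      have hyF : y ∈ F' ∧ y ∉ F := (hyiff y).mpr rfl
      refine ⟨(x, y), ?_, ?_⟩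
      · simp only [mem_product, mem_sdiff]
        exact ⟨hxF.1, hF'S hyF.1, hyF.2⟩
      · ext a
        simp only [mem_insert, mem_erase]
        constructor
        · rintro (rfl | ⟨hax, haF⟩)
          · exact hyF.1
          · by_contra haF'
            exact hax ((hxiff a).mp ⟨haF, haF'⟩)
        · intro haF'
          by_cases haF : a ∈ F
          · exact Or.inr ⟨fun hh => hxF.2 (hh ▸ haF'), haF⟩
          · exact Or.inl ((hyiff a).mp ⟨haF', haF⟩)
  rw [← key, card_product, card_sdiff_of_subset hFS, hF]

end AuxIndep

end AuxIndep

/-- For an independent set `S` of a pure `k`-dimensional complex `X`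
with `|S| ≥ k`, the matrix `Y^S` (agreeing with the complete down-Laplacian `L↓_{k-1}`
on pairs `(F,F')` with `F ∪ F' ⊆ S` and vanishing elsewhere) is positive semidefinite,
`⟨Y^S, I⟩ = k·binom(|S|,k)` and `⟨Y^S, L↓_{k-1}⟩ = k·binom(|S|,k)·|S|`. -/
theorem indep_matrix_posSemidef_trace
    {V : Type} [Fintype V] [DecidableEq V] [LinearOrder V] (X : SC V) (k : ℕ)
    (hk : 1 ≤ k) (hpure : X.Pure k) (S : Finset V) (hS : X.IsIndep k S)
    (hcard : k ≤ S.card)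
    (YS : Matrix (KSet V k) (KSet V k) ℝ)
    (hYS : ∀ F F' : KSet V k, YS F F' = if F.1 ∪ F'.1 ⊆ S then Lc V k F F' else 0) :
    YS.PosSemidef ∧
    Matrix.trace YS = (k : ℝ) * (S.card.choose k : ℝ) ∧
    Matrix.trace (YS * Lc V k) = (k : ℝ) * (S.card.choose k : ℝ) * (S.card : ℝ) := by
  have hY' : ∀ F F' : KSet V k, YS F F' =
      if F.1 ⊆ S ∧ F'.1 ⊆ S then Lc V k F F' else 0 := by
    intro F F'
    rw [hYS F F']
    exact if_congr union_subset_iff rfl rfl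
  refine ⟨?_, ?_, ?_⟩
  · -- positive semidefiniteness
    set M : Matrix (KSet V k) (Finset V) ℝ :=
      fun F K => if F.1 ⊆ S ∧ K.card = k - 1 then inc F.1 K else 0 with hMdef
    have hM : YS = M * Mᴴ := by
      ext F F'
      rw [Matrix.mul_apply, hY' F F']
      simp only [Matrix.conjTranspose_apply, star_trivial]
      by_cases hF : F.1 ⊆ S ∧ F'.1 ⊆ S
      · rw [if_pos hF]
        have hsum := AuxIndep.sum_inc_mul (V := V) hk F.2 F'.2
        rw [AuxIndep.Lc_apply, ← hsum]
        refine Finset.sum_congr rfl (fun K _ => ?_)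
        by_cases hc : K.card = k - 1
        · rw [if_pos hc, hMdef]
          simp only [if_pos (And.intro hF.1 hc), if_pos (And.intro hF.2 hc)]
        · rw [if_neg hc, hMdef]
          simp only [hc, and_false, if_false, mul_zero]
      · rw [if_neg hF]
        refine (Finset.sum_eq_zero (fun K _ => ?_)).symm
        rw [hMdef]
        rcases not_and_or.mp hF with h | h
        · simp only [h, false_and, if_false, zero_mul]
        · simp only [h, false_and, if_false, mul_zero]
    rw [hM]
    exact Matrix.posSemidef_self_mul_conjTranspose M
  · -- trace
    have : Matrix.trace YS = ∑ F : KSet V k, (if F.1 ⊆ S then (k : ℝ) else 0) := by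
      rw [Matrix.trace]
      refine Finset.sum_congr rfl (fun F _ => ?_)
      rw [Matrix.diag_apply, hY' F F]
      by_cases hFS : (F.1 : Finset V) ⊆ S
      · rw [if_pos (And.intro hFS hFS), if_pos hFS, AuxIndep.Lc_apply, if_pos rfl]
      · rw [if_neg (fun hh => hFS hh.1), if_neg hFS]
    rw [this, AuxIndep.sum_indicator, mul_comm]
  · -- trace against Lc
    have inner : ∀ F : KSet V k,
        (∑ F' : KSet V k, YS F F' * Lc V k F' F) =
          if F.1 ⊆ S then (k : ℝ) * (S.card : ℝ) else 0 := by
      intro F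
      by_cases hFS : F.1 ⊆ S
      · rw [if_pos hFS]
        have hterm : ∀ F' : KSet V k, YS F F' * Lc V k F' F =
            (fun G : Finset V =>
              if G ⊆ S then (if F.1 = G then (k : ℝ) else eps F.1 G) ^ 2 else 0) F'.1 := by
          intro F'
          simp only []
          rw [hY' F F', AuxIndep.Lc_comm k F' F, AuxIndep.Lc_apply]
          by_cases h' : F'.1 ⊆ S
          · rw [if_pos (And.intro hFS h'), if_pos h', sq]
          · rw [if_neg (fun hh => h' hh.2), if_neg h', zero_mul]
        rw [Finset.sum_congr rfl (fun F' _ => hterm F'),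
          ← Finset.sum_subtype (Finset.univ.powersetCard k)
            (fun x => by simp [mem_powersetCard])
            (fun G : Finset V =>
              if G ⊆ S then (if F.1 = G then (k : ℝ) else eps F.1 G) ^ 2 else 0),
          ← Finset.sum_filter, AuxIndep.filter_powersetCard,
          ← Finset.sum_erase_add _ _ (mem_powersetCard.mpr ⟨hFS, F.2⟩), if_pos rfl]
        have herase : ∑ G ∈ (S.powersetCard k).erase F.1,
            (if F.1 = G then (k : ℝ) else eps F.1 G) ^ 2 =
            ∑ G ∈ S.powersetCard k, (if (F.1 ∩ G).card = k - 1 then (1 : ℝ) else 0) := by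
          rw [Finset.sum_congr rfl (fun G hG => ?_)]
          · refine Finset.sum_erase _ ?_
            rw [inter_self, F.2, if_neg (by omega)]
          · rw [mem_erase] at hG
            rw [if_neg (fun hh => hG.1 hh.symm),
              AuxIndep.eps_sq hk F.2 (mem_powersetCard.mp hG.2).2]
        rw [herase, Finset.sum_boole, AuxIndep.card_adj hk hFS F.2]
        have hc1 : ((k * (S.card - k) : ℕ) : ℝ) = (k : ℝ) * ((S.card : ℝ) - (k : ℝ)) := by
          rw [Nat.cast_mul, Nat.cast_sub hcard]
        rw [hc1]
        ring
      · rw [if_neg hFS]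
        refine Finset.sum_eq_zero (fun F' _ => ?_)
        rw [hY' F F', if_neg (fun hh => hFS hh.1), zero_mul]
    have htr : Matrix.trace (YS * Lc V k) =
        ∑ F : KSet V k, (if F.1 ⊆ S then (k : ℝ) * (S.card : ℝ) else 0) := by
      rw [Matrix.trace]
      refine Finset.sum_congr rfl (fun F _ => ?_)
      rw [Matrix.diag_apply, Matrix.mul_apply, inner F]
    rw [htr, AuxIndep.sum_indicator]
    ring
end

section
/- For a pure k-dimensional simplicial complex X, the independence number satisfies α(X) ≤ ϑ_k(X), where ϑ_k(X) is the optimal value of the semidefinite program maximizing ⟨L↓_{k-1}, Y⟩ over positive semidefinite matrices Y indexed by k-subsets of V with trace(Y) = 1, Y_{F,F'} = 0 if F ∪ F' ∈ X_k, Y_{F,F'} = 0 if |F ∪ F'| ≥ k+2, and ε_{F,F'}Y_{F,F'} = ε_{F'',F†}Y_{F'',F†} whenever F ∪ F' = F'' ∪ F†. -/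
set_option linter.unusedSectionVars false
set_option maxHeartbeats 1000000


open Finset Matrix

variable {V : Type} [Fintype V] [DecidableEq V] [LinearOrder V]

lemma inc_eq_zero {F K : Finset V} (h : ¬(K ⊆ F ∧ F.card = K.card + 1)) : inc F K = 0 := by
  rw [inc, if_neg h]

lemma inc_mul_self {F K : Finset V} (h1 : K ⊆ F) (h2 : F.card = K.card + 1) :
    inc F K * inc F K = 1 := by
  have hc : (F \ K).card = 1 := by rw [card_sdiff_of_subset h1, h2]; omega
  obtain ⟨x, hx⟩ := Finset.card_eq_one.mp hc
  rw [inc, if_pos ⟨h1, h2⟩, hx, Finset.sum_singleton, ← pow_add]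
  exact Even.neg_one_pow ⟨_, rfl⟩

lemma abs_inc_le_one (F K : Finset V) : |inc F K| ≤ 1 := by
  rw [inc]
  split
  · next h =>
    have hc : (F \ K).card = 1 := by rw [card_sdiff_of_subset h.1, h.2]; omega
    obtain ⟨x, hx⟩ := Finset.card_eq_one.mp hc
    rw [hx, Finset.sum_singleton, abs_pow, abs_neg, abs_one, one_pow]
  · simp

lemma eps_comm (F F' : Finset V) : eps F F' = eps F' F := by
  rw [eps, eps, inter_comm, mul_comm]

lemma eps_self (F : Finset V) : eps F F = 0 := by
  rw [eps, inter_self, inc_eq_zero (by omega), zero_mul]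

lemma eps_eq_zero_of_big {k : ℕ} {F F' : Finset V} (hF : F.card = k) (hF' : F'.card = k)
    (h : k + 2 ≤ (F ∪ F').card) : eps F F' = 0 := by
  have hc := Finset.card_inter_add_card_union F F'
  rw [eps, inc_eq_zero (by omega), zero_mul]

lemma eps_mul_self {k : ℕ} {F F' : Finset V} (hF : F.card = k) (hF' : F'.card = k)
    (h : (F ∪ F').card = k + 1) : eps F F' * eps F F' = 1 := by
  have hc := Finset.card_inter_add_card_union F F'
  have h1 : inc F (F ∩ F') * inc F (F ∩ F') = 1 :=
    inc_mul_self inter_subset_left (by omega)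
  have h2 : inc F' (F ∩ F') * inc F' (F ∩ F') = 1 :=
    inc_mul_self inter_subset_right (by omega)
  rw [eps, mul_mul_mul_comm, h1, h2, one_mul]

lemma union_card_ge {k : ℕ} {F F' : Finset V} (hF : F.card = k) (hF' : F'.card = k)
    (hne : F ≠ F') : k + 1 ≤ (F ∪ F').card := by
  have h1 : F ⊆ F ∪ F' := subset_union_left
  have h2 := Finset.card_le_card h1
  rcases eq_or_lt_of_le h2 with h | h
  · exfalso
    have hFu : F = F ∪ F' := Finset.eq_of_subset_of_card_le h1 (le_of_eq h.symm)
    have : F' ⊆ F := by rw [hFu]; exact subset_union_right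
    exact hne (Finset.eq_of_subset_of_card_le this (by omega)).symm
  · omega

lemma gram {k : ℕ} (hk : 1 ≤ k) (F F' : KSet V k) :
    ∑ K : KSet V (k-1), inc F.1 K.1 * inc F'.1 K.1 = Lc V k F F' := by
  have hsum : ∑ K : KSet V (k-1), inc F.1 K.1 * inc F'.1 K.1
      = ∑ K ∈ Finset.univ.powersetCard (k-1), inc F.1 K * inc F'.1 K :=
    (Finset.sum_subtype (Finset.univ.powersetCard (k-1))
      (fun K => Finset.mem_powersetCard_univ)
      (fun K => inc F.1 K * inc F'.1 K)).symm
  rw [hsum]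
  rcases eq_or_ne F F' with rfl | hne
  · rw [Lc, if_pos rfl]
    rw [← Finset.sum_subset (Finset.powersetCard_mono (Finset.subset_univ F.1) : F.1.powersetCard (k-1) ⊆ _)
      (fun K hK hK2 => ?_)]
    · rw [Finset.sum_congr rfl (fun K hK => ?_), Finset.sum_const]
      · rw [Finset.card_powersetCard, F.2, nsmul_eq_mul, mul_one]
        congr 1
        obtain ⟨m, rfl⟩ : ∃ m, k = m + 1 := ⟨k-1, by omega⟩
        simp [Nat.choose_succ_self_right]
      · rw [Finset.mem_powersetCard] at hK
        exact inc_mul_self hK.1 (by rw [F.2, hK.2]; omega)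
    · rw [Finset.mem_powersetCard] at hK hK2
      push_neg at hK2
      have : ¬ K ⊆ F.1 := fun hs => absurd (hK.2) (by intro h; exact absurd hs (by
        intro hss; exact (hK2 hss h).elim))
      rw [inc_eq_zero (fun hh => this hh.1), zero_mul]
  · rw [Lc, if_neg hne]
    have hne' : F.1 ≠ F'.1 := fun h => hne (Subtype.ext h)
    have hIle : (F.1 ∩ F'.1).card ≤ k := by
      have h := Finset.card_le_card (Finset.inter_subset_left : F.1 ∩ F'.1 ⊆ F.1)
      rw [F.2] at h; exact h
    have hInek : (F.1 ∩ F'.1).card ≠ k := by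
      intro h
      have h1 : F.1 ∩ F'.1 = F.1 := Finset.eq_of_subset_of_card_le Finset.inter_subset_left
        (by rw [F.2, h])
      have h2 : F.1 ∩ F'.1 = F'.1 := Finset.eq_of_subset_of_card_le Finset.inter_subset_right
        (by rw [F'.2, h])
      exact hne' (h1 ▸ h2)
    rcases eq_or_ne (F.1 ∩ F'.1).card (k-1) with hcase | hcase
    · rw [Finset.sum_eq_single_of_mem (F.1 ∩ F'.1)
        (Finset.mem_powersetCard_univ.mpr hcase) (fun K hK hKne => ?_)]
      · rfl
      · rw [Finset.mem_powersetCard_univ] at hK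
        by_cases h1 : K ⊆ F.1
        · by_cases h2 : K ⊆ F'.1
          · exact absurd (Finset.eq_of_subset_of_card_le (Finset.subset_inter h1 h2)
              (by omega)) hKne
          · rw [inc_eq_zero (fun hh => h2 hh.1), mul_zero]
        · rw [inc_eq_zero (fun hh => h1 hh.1), zero_mul]
    · have hIlt : (F.1 ∩ F'.1).card < k - 1 := by omega
      rw [Finset.sum_eq_zero (fun K hK => ?_), eps,
        inc_eq_zero (fun hh => by rw [F.2] at hh; omega), zero_mul]
      rw [Finset.mem_powersetCard_univ] at hK
      by_cases h1 : K ⊆ F.1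
      · by_cases h2 : K ⊆ F'.1
        · have := Finset.card_le_card (Finset.subset_inter h1 h2)
          omega
        · rw [inc_eq_zero (fun hh => h2 hh.1), mul_zero]
      · rw [inc_eq_zero (fun hh => h1 hh.1), zero_mul]

lemma count_neighbors {k : ℕ} {S F : Finset V} (hF : F ⊆ S) (hFk : F.card = k) :
    ((S.powersetCard k).filter fun F' => (F ∪ F').card = k + 1).card = k * (S.card - k) := by
  have himg : ((S.powersetCard k).filter fun F' => (F ∪ F').card = k + 1)
      = (F ×ˢ (S \ F)).image (fun p => insert p.2 (F.erase p.1)) := by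
    ext F'
    simp only [mem_filter, mem_powersetCard, mem_image, mem_product, mem_sdiff, Prod.exists]
    constructor
    · rintro ⟨⟨hsub, hcard⟩, hu⟩
      have h1 : (F \ F').card = 1 := by
        have := Finset.card_sdiff_add_card F F'
        omega
      have h2 : (F' \ F).card = 1 := by
        have := Finset.card_sdiff_add_card F' F
        rw [union_comm] at this
        omega
      obtain ⟨x, hx⟩ := Finset.card_eq_one.mp h1
      obtain ⟨y, hy⟩ := Finset.card_eq_one.mp h2
      have hxm : x ∈ F \ F' := hx ▸ Finset.mem_singleton_self x
      have hym : y ∈ F' \ F := hy ▸ Finset.mem_singleton_self y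
      rw [Finset.mem_sdiff] at hxm hym
      refine ⟨x, y, ⟨hxm.1, hsub hym.1, hym.2⟩, ?_⟩
      ext z
      simp only [Finset.mem_insert, Finset.mem_erase]
      constructor
      · rintro (rfl | ⟨hzx, hzF⟩)
        · exact hym.1
        · by_contra hzF'
          have : z ∈ F \ F' := Finset.mem_sdiff.mpr ⟨hzF, hzF'⟩
          rw [hx, Finset.mem_singleton] at this
          exact hzx this
      · intro hz
        by_cases hzF : z ∈ F
        · right
          refine ⟨fun h => ?_, hzF⟩
          subst h; exact hxm.2 hz
        · left
          have : z ∈ F' \ F := Finset.mem_sdiff.mpr ⟨hz, hzF⟩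
          rw [hy, Finset.mem_singleton] at this
          exact this
    · rintro ⟨x, y, ⟨hxF, hyS, hyF⟩, rfl⟩
      have hyx : y ∉ F.erase x := fun h => hyF (Finset.mem_of_mem_erase h)
      have hk1 : 1 ≤ k := by rw [← hFk]; exact Finset.card_pos.mpr ⟨x, hxF⟩
      have hcard : (insert y (F.erase x)).card = k := by
        rw [Finset.card_insert_of_notMem hyx, Finset.card_erase_of_mem hxF, hFk]
        omega
      refine ⟨⟨?_, hcard⟩, ?_⟩
      · intro z hz
        rcases Finset.mem_insert.mp hz with rfl | hz
        · exact hyS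
        · exact hF (Finset.mem_of_mem_erase hz)
      · have hun : F ∪ insert y (F.erase x) = insert y F := by
          ext z
          simp only [Finset.mem_union, Finset.mem_insert, Finset.mem_erase]
          constructor
          · rintro (h | h | ⟨_, h⟩) <;> tauto
          · rintro (rfl | h) <;> tauto
        rw [hun, Finset.card_insert_of_notMem hyF, hFk]
  have hinj : Set.InjOn (fun p : V × V => insert p.2 (F.erase p.1)) (↑(F ×ˢ (S \ F)) : Set (V × V)) := by
    rintro ⟨x, y⟩ hp ⟨x', y'⟩ hq h
    simp only [Finset.mem_coe, Finset.mem_product, Finset.mem_sdiff] at hp hq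
    dsimp at h
    have hyy : y' = y := by
      have hmem : y' ∈ insert y (F.erase x) := h ▸ Finset.mem_insert_self y' _
      rcases Finset.mem_insert.mp hmem with h1 | h1
      · exact h1
      · exact absurd (Finset.mem_of_mem_erase h1) hq.2.2
    have hxx : x = x' := by
      have hx1 : x ∉ insert y (F.erase x) := by
        simp only [Finset.mem_insert, Finset.mem_erase]
        push_neg
        exact ⟨fun hxy => (hq.2.2 (hyy ▸ hxy ▸ hp.1)).elim, fun h' _ => (h' rfl).elim⟩
      rw [h] at hx1
      simp only [Finset.mem_insert, Finset.mem_erase] at hx1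
      push_neg at hx1
      by_contra hne
      exact (hx1.2 hne) hp.1
    simp [hxx, hyy]
  rw [himg, Finset.card_image_of_injOn hinj, Finset.card_product, Finset.card_sdiff_of_subset hF, hFk]

lemma psd_diag_nonneg {ι : Type} [Fintype ι] [DecidableEq ι] {M : Matrix ι ι ℝ}
    (hM : M.PosSemidef) (i : ι) : 0 ≤ M i i := by
  have h := hM.dotProduct_mulVec_nonneg (Pi.single i 1)
  simpa [Matrix.mulVec_single, single_dotProduct] using h

lemma psd_abs {ι : Type} [Fintype ι] [DecidableEq ι] {M : Matrix ι ι ℝ}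
    (hM : M.PosSemidef) (i j : ι) : |M i j| ≤ (M i i + M j j) / 2 := by
  rcases eq_or_ne i j with rfl | hij
  · rw [abs_of_nonneg (psd_diag_nonneg hM i)]
    linarith [psd_diag_nonneg hM i]
  · have hsym : M j i = M i j := by
      have h := congrFun (congrFun hM.1 i) j
      simpa using h
    have key : ∀ t : ℝ, 0 ≤ M i i + t * M i j + t * M j i + t * t * M j j := by
      intro t
      have h := hM.dotProduct_mulVec_nonneg (Pi.single i 1 + Pi.single j t)
      simp only [star_trivial, Matrix.mulVec_add, Matrix.mulVec_single,
        dotProduct_add, add_dotProduct, single_dotProduct, Pi.add_apply,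
        Pi.smul_apply, op_smul_eq_mul, Matrix.col_apply] at h
      nlinarith [h]
    have h1 := key 1
    have h2 := key (-1)
    rw [abs_le]
    constructor <;> nlinarith [hsym]

lemma psd_smul {ι : Type} [Fintype ι] {M : Matrix ι ι ℝ} (hM : M.PosSemidef) {c : ℝ}
    (hc : 0 ≤ c) : (c • M).PosSemidef := by
  refine Matrix.PosSemidef.of_dotProduct_mulVec_nonneg ?_ ?_
  · unfold Matrix.IsHermitian
    rw [Matrix.conjTranspose_smul, star_trivial, hM.1]
  · intro x
    rw [Matrix.smul_mulVec, dotProduct_smul, smul_eq_mul]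
    exact mul_nonneg hc (hM.dotProduct_mulVec_nonneg x)

noncomputable def YS (V : Type) [Fintype V] [DecidableEq V] [LinearOrder V] (k : ℕ)
    (S : Finset V) : Matrix (KSet V k) (KSet V k) ℝ :=
  fun F F' => if F.1 ⊆ S ∧ F'.1 ⊆ S then Lc V k F F' else 0

lemma YS_posSemidef {k : ℕ} (hk : 1 ≤ k) (S : Finset V) : (YS V k S).PosSemidef := by
  set B : Matrix (KSet V k) (KSet V (k-1)) ℝ :=
    fun F K => if F.1 ⊆ S then inc F.1 K.1 else 0 with hB
  have hYS : YS V k S = B * Bᴴ := by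
    ext F F'
    rw [Matrix.mul_apply]
    simp only [Matrix.conjTranspose_apply]
    by_cases hF : F.1 ⊆ S
    · by_cases hF' : F'.1 ⊆ S
      · simp only [YS, hB, Matrix.conjTranspose_apply, star_trivial, if_pos hF, if_pos hF',
          if_pos (And.intro hF hF')]
        exact (gram hk F F').symm
      · simp [YS, hB, Matrix.conjTranspose_apply, hF, hF']
    · simp [YS, hB, Matrix.conjTranspose_apply, hF]
  rw [hYS]
  exact Matrix.posSemidef_self_mul_conjTranspose B

lemma Lc_symm {k : ℕ} (F F' : KSet V k) : Lc V k F F' = Lc V k F' F := by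
  rcases eq_or_ne F F' with rfl | hne
  · rfl
  · simp only [Lc, if_neg hne, if_neg (Ne.symm hne)]
    exact eps_comm F.1 F'.1

lemma Lc_sq {k : ℕ} (hk : 1 ≤ k) (F F' : KSet V k) :
    Lc V k F F' * Lc V k F' F =
      if F = F' then (k : ℝ) * k else if (F.1 ∪ F'.1).card = k + 1 then 1 else 0 := by
  rw [Lc_symm F' F]
  rcases eq_or_ne F F' with rfl | hne
  · simp [Lc]
  · simp only [Lc, if_neg hne]
    have hne' : F.1 ≠ F'.1 := fun h => hne (Subtype.ext h)
    have hge := union_card_ge F.2 F'.2 hne'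
    rcases eq_or_ne (F.1 ∪ F'.1).card (k+1) with hc | hc
    · rw [if_pos hc]
      exact eps_mul_self F.2 F'.2 hc
    · rw [if_neg hc, eps_eq_zero_of_big F.2 F'.2 (by omega), zero_mul]

lemma epsY {k : ℕ} (hk : 1 ≤ k) (S : Finset V) (F F' : KSet V k) :
    eps F.1 F'.1 * YS V k S F F' =
      if (F.1 ∪ F'.1) ⊆ S ∧ (F.1 ∪ F'.1).card = k + 1 then 1 else 0 := by
  by_cases hsub : F.1 ⊆ S ∧ F'.1 ⊆ S
  · rw [YS]
    simp only [if_pos hsub]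
    rcases eq_or_ne F F' with rfl | hne
    · rw [eps_self, zero_mul, if_neg]
      rintro ⟨-, hc⟩
      rw [Finset.union_self, F.2] at hc
      omega
    · have hne' : F.1 ≠ F'.1 := fun h => hne (Subtype.ext h)
      have hge := union_card_ge F.2 F'.2 hne'
      rw [Lc, if_neg hne]
      rcases eq_or_ne (F.1 ∪ F'.1).card (k+1) with hc | hc
      · rw [if_pos ⟨Finset.union_subset hsub.1 hsub.2, hc⟩]
        exact eps_mul_self F.2 F'.2 hc
      · rw [if_neg (fun h => hc h.2), eps_eq_zero_of_big F.2 F'.2 (by omega), zero_mul]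
  · rw [YS]
    simp only [if_neg hsub, mul_zero]
    rw [if_neg]
    rintro ⟨hu, -⟩
    exact hsub ⟨subset_trans Finset.subset_union_left hu,
      subset_trans Finset.subset_union_right hu⟩

lemma sum_kset_ind {k : ℕ} (S : Finset V) (f : Finset V → ℝ) :
    ∑ F : KSet V k, (if F.1 ⊆ S then f F.1 else 0) = ∑ F ∈ S.powersetCard k, f F := by
  rw [← Finset.sum_subtype (Finset.univ.powersetCard k)
    (fun K => Finset.mem_powersetCard_univ) (fun F => if F ⊆ S then f F else 0)]
  rw [← Finset.sum_filter]
  congr 1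
  ext G
  rw [Finset.mem_filter, Finset.mem_powersetCard_univ, Finset.mem_powersetCard]
  tauto


lemma abs_Lc_le {k : ℕ} (hk : 1 ≤ k) (F F' : KSet V k) : |Lc V k F F'| ≤ (k : ℝ) := by
  rcases eq_or_ne F F' with rfl | hne
  · rw [show Lc V k F F = (k:ℝ) from by simp [Lc]]
    rw [abs_of_nonneg (by positivity)]
  · simp only [Lc, if_neg hne, eps, abs_mul]
    calc |inc F.1 (F.1 ∩ F'.1)| * |inc F'.1 (F.1 ∩ F'.1)| ≤ 1 * 1 :=
        mul_le_mul (abs_inc_le_one _ _) (abs_inc_le_one _ _) (abs_nonneg _) zero_le_one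
      _ ≤ (k : ℝ) := by rw [mul_one]; exact_mod_cast hk

/-- For a pure `k`-dimensional simplicial complex `X`, the independence
number is bounded above by the theta number: `α(X) ≤ ϑ_k(X)`. -/
theorem alpha_le_theta
    {V : Type} [Fintype V] [DecidableEq V] [LinearOrder V] (X : SC V) (k : ℕ)
    (hk : 1 ≤ k) (hkn : k ≤ Fintype.card V) (hpure : X.Pure k) :
    (alphaNum X k : ℝ) ≤ theta X k := by
  classical
  have hAbdd : BddAbove {m | ∃ S : Finset V, X.IsIndep k S ∧ S.card = m} := by
    refine ⟨Fintype.card V, ?_⟩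
    rintro m ⟨S, -, rfl⟩
    exact Finset.card_le_univ S
  have hA0 : (0 : ℕ) ∈ {m | ∃ S : Finset V, X.IsIndep k S ∧ S.card = m} := by
    refine ⟨∅, fun H hH hsub => ?_, Finset.card_empty⟩
    have h1 : H.card = k + 1 := (Finset.mem_filter.mp hH).2
    have h2 := Finset.card_le_card hsub
    simp only [Finset.card_empty, Nat.le_zero] at h2
    omega
  have hmem : alphaNum X k ∈ {m | ∃ S : Finset V, X.IsIndep k S ∧ S.card = m} :=
    Nat.sSup_mem ⟨0, hA0⟩ hAbdd
  obtain ⟨S, hSind, hScard⟩ := hmem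
  have hkA : k ∈ {m | ∃ S : Finset V, X.IsIndep k S ∧ S.card = m} := by
    obtain ⟨T, -, hTcard⟩ := Finset.exists_subset_card_eq
      (show k ≤ (Finset.univ : Finset V).card by simpa using hkn)
    refine ⟨T, fun H hH hsub => ?_, hTcard⟩
    have h1 : H.card = k + 1 := (Finset.mem_filter.mp hH).2
    have h2 := Finset.card_le_card hsub
    omega
  have hks : k ≤ S.card := by
    rw [hScard]
    exact le_csSup hAbdd hkA
  set s := S.card with hsdef
  have hchoose : 0 < s.choose k := Nat.choose_pos hks
  have hcpos : (0:ℝ) < (k : ℝ) * (s.choose k : ℝ) := by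
    apply mul_pos
    · exact_mod_cast hk
    · exact_mod_cast hchoose
  set c : ℝ := ((k : ℝ) * (s.choose k : ℝ))⁻¹ with hcdef
  set Y : Matrix (KSet V k) (KSet V k) ℝ := c • YS V k S with hYdef
  have hfeas : thetaFeasible X k Y := by
    refine ⟨psd_smul (YS_posSemidef hk S) (le_of_lt (inv_pos.mpr hcpos)), ?_, ?_, ?_, ?_⟩
    · rw [hYdef, Matrix.trace_smul]
      have htrYS : Matrix.trace (YS V k S) = (k : ℝ) * (s.choose k : ℝ) := by
        rw [Matrix.trace]
        have h1 : ∀ F : KSet V k, (YS V k S).diag F = if F.1 ⊆ S then (k:ℝ) else 0 := by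
          intro F
          simp [Matrix.diag, YS, Lc]
        rw [Finset.sum_congr rfl (fun F _ => h1 F), sum_kset_ind S (fun _ => (k:ℝ)),
          Finset.sum_const, Finset.card_powersetCard, nsmul_eq_mul]
        ring
      rw [htrYS, smul_eq_mul, hcdef, inv_mul_cancel₀ (ne_of_gt hcpos)]
    · intro F F' hFF'
      rw [hYdef, Matrix.smul_apply, YS, if_neg, smul_zero]
      rintro ⟨h1, h2⟩
      exact hSind _ hFF' (Finset.union_subset h1 h2)
    · intro F F' hcard
      rw [hYdef, Matrix.smul_apply, YS]
      by_cases hsub : F.1 ⊆ S ∧ F'.1 ⊆ S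
      · rw [if_pos hsub]
        have hne : F ≠ F' := by
          rintro rfl
          rw [Finset.union_self, F.2] at hcard
          omega
        rw [show Lc V k F F' = eps F.1 F'.1 from by simp only [Lc, if_neg hne],
          eps_eq_zero_of_big F.2 F'.2 hcard, smul_zero]
      · rw [if_neg hsub, smul_zero]
    · intro F F' G G' hunion
      have e1 : eps F.1 F'.1 * Y F F'
          = c * (if (F.1 ∪ F'.1) ⊆ S ∧ (F.1 ∪ F'.1).card = k + 1 then 1 else 0) := by
        rw [hYdef, Matrix.smul_apply, smul_eq_mul, ← epsY hk S F F']
        ring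
      have e2 : eps G.1 G'.1 * Y G G'
          = c * (if (G.1 ∪ G'.1) ⊆ S ∧ (G.1 ∪ G'.1).card = k + 1 then 1 else 0) := by
        rw [hYdef, Matrix.smul_apply, smul_eq_mul, ← epsY hk S G G']
        ring
      rw [e1, e2, hunion]
  have hobj : Matrix.trace (Lc V k * Y) = (s : ℝ) := by
    rw [hYdef, Matrix.mul_smul, Matrix.trace_smul, smul_eq_mul]
    have hdiag : ∀ F : KSet V k, (Lc V k * YS V k S).diag F
        = if F.1 ⊆ S then ((k:ℝ) * (k:ℝ) + ((k * (s - k) : ℕ) : ℝ)) else 0 := by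
      intro F
      have hterm : ∀ F' : KSet V k, Lc V k F F' * YS V k S F' F
          = if F'.1 ⊆ S ∧ F.1 ⊆ S then Lc V k F F' * Lc V k F' F else 0 := by
        intro F'
        rw [YS]
        split
        · rfl
        · rw [mul_zero]
      rw [Matrix.diag_apply, Matrix.mul_apply, Finset.sum_congr rfl (fun F' _ => hterm F')]
      by_cases hF : F.1 ⊆ S
      · rw [if_pos hF]
        have hterm2 : ∀ F' : KSet V k, (if F'.1 ⊆ S ∧ F.1 ⊆ S then Lc V k F F' * Lc V k F' F else 0)
            = if F'.1 ⊆ S then ((if F.1 = F'.1 then (k:ℝ)*(k:ℝ) else 0)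
                + (if (F.1 ∪ F'.1).card = k + 1 then 1 else 0)) else 0 := by
          intro F'
          by_cases hF' : F'.1 ⊆ S
          · rw [if_pos ⟨hF', hF⟩, if_pos hF', Lc_sq hk F F']
            rcases eq_or_ne F F' with rfl | hne
            · rw [if_pos rfl, if_pos rfl, Finset.union_self, F.2, if_neg (by omega), add_zero]
            · rw [if_neg hne, if_neg (fun h => hne (Subtype.ext h)), zero_add]
          · rw [if_neg (fun h => hF' h.1), if_neg hF']
        rw [Finset.sum_congr rfl (fun F' _ => hterm2 F'),
          sum_kset_ind S (fun G => (if F.1 = G then (k:ℝ)*(k:ℝ) else 0)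
            + (if (F.1 ∪ G).card = k + 1 then 1 else 0)),
          Finset.sum_add_distrib, Finset.sum_ite_eq,
          if_pos (Finset.mem_powersetCard.mpr ⟨hF, F.2⟩), Finset.sum_boole,
          count_neighbors hF F.2]
      · rw [if_neg hF, Finset.sum_eq_zero]
        intro F' _
        rw [if_neg (fun h => hF h.2)]
    rw [Matrix.trace, Finset.sum_congr rfl (fun F _ => hdiag F),
      sum_kset_ind S (fun _ => ((k:ℝ) * (k:ℝ) + ((k * (s - k) : ℕ) : ℝ))),
      Finset.sum_const, Finset.card_powersetCard, nsmul_eq_mul]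
    have hcast : ((k * (s - k) : ℕ) : ℝ) = (k : ℝ) * ((s : ℝ) - (k : ℝ)) := by
      push_cast [Nat.cast_sub hks]
      ring
    rw [hcast, hcdef]
    have hkne : (k : ℝ) ≠ 0 := Nat.cast_ne_zero.mpr (by omega)
    have hchne : ((s.choose k : ℕ) : ℝ) ≠ 0 := by exact_mod_cast hchoose.ne'
    field_simp
    ring
  have hObdd : BddAbove {t | ∃ Y, thetaFeasible X k Y ∧ Matrix.trace (Lc V k * Y) = t} := by
    refine ⟨(k : ℝ) * (Fintype.card (KSet V k) : ℝ), ?_⟩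
    rintro t ⟨Z, ⟨hpsd, htrZ, -, -, -⟩, rfl⟩
    have htr' : ∑ F : KSet V k, Z F F = 1 := by
      simpa [Matrix.trace, Matrix.diag] using htrZ
    have step1 : Matrix.trace (Lc V k * Z)
        = ∑ F : KSet V k, ∑ F' : KSet V k, Lc V k F F' * Z F' F := by
      simp [Matrix.trace, Matrix.diag, Matrix.mul_apply]
    rw [step1]
    have step2 : ∑ F : KSet V k, ∑ F' : KSet V k, Lc V k F F' * Z F' F
        ≤ ∑ F : KSet V k, ∑ F' : KSet V k, (k:ℝ) * ((Z F' F' + Z F F)/2) := by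
      refine Finset.sum_le_sum fun F _ => Finset.sum_le_sum fun F' _ => ?_
      calc Lc V k F F' * Z F' F ≤ |Lc V k F F' * Z F' F| := le_abs_self _
        _ = |Lc V k F F'| * |Z F' F| := abs_mul _ _
        _ ≤ (k:ℝ) * ((Z F' F' + Z F F)/2) :=
            mul_le_mul (abs_Lc_le hk F F') (psd_abs hpsd F' F) (abs_nonneg _)
              (by positivity)
    refine le_trans step2 (le_of_eq ?_)
    have h1 : ∀ F : KSet V k, ∑ F' : KSet V k, (k:ℝ) * ((Z F' F' + Z F F)/2)
        = (k:ℝ)/2 + (Fintype.card (KSet V k) : ℝ) * ((k:ℝ)/2 * Z F F) := by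
      intro F
      have h2 : ∀ F' : KSet V k, (k:ℝ) * ((Z F' F' + Z F F)/2)
          = (k:ℝ)/2 * Z F' F' + (k:ℝ)/2 * Z F F := fun F' => by ring
      rw [Finset.sum_congr rfl (fun F' _ => h2 F'), Finset.sum_add_distrib,
        ← Finset.mul_sum, htr', Finset.sum_const, Finset.card_univ, nsmul_eq_mul,
        mul_one]
    rw [Finset.sum_congr rfl (fun F _ => h1 F), Finset.sum_add_distrib,
      Finset.sum_const, Finset.card_univ, nsmul_eq_mul, ← Finset.mul_sum,
      ← Finset.mul_sum, htr']
    ring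
  have hmemO : (s : ℝ) ∈ {t | ∃ Y, thetaFeasible X k Y ∧ Matrix.trace (Lc V k * Y) = t} :=
    ⟨Y, hfeas, hobj⟩
  rw [← hScard]
  exact le_csSup hObdd hmemO
end

section
/- If X is the empty pure k-complex on n vertices (X_k = ∅), then ϑ_k(X) = n; if X is the complete k-complex K_n^k, then ϑ_k(X) = k. In both cases ϑ_k(X) = α(X). -/
set_option linter.unusedSectionVars false
set_option maxHeartbeats 1000000


open Finset Matrix

variable {V : Type} [Fintype V] [DecidableEq V] [LinearOrder V]

namespace ThetaAux

lemma inc_of_not {F K : Finset V} (h : ¬(K ⊆ F ∧ F.card = K.card + 1)) : inc F K = 0 :=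
  if_neg h

lemma inc_insert {K : Finset V} {a : V} (ha : a ∉ K) :
    inc (insert a K) K = (-1 : ℝ) ^ (K.filter (fun y => y < a)).card := by
  have hsd : insert a K \ K = {a} := by
    ext x
    simp only [mem_sdiff, mem_insert, mem_singleton]
    constructor
    · rintro ⟨h1 | h1, h2⟩ <;> tauto
    · rintro rfl; exact ⟨Or.inl rfl, ha⟩
  rw [inc, if_pos ⟨subset_insert _ _, card_insert_of_notMem ha⟩, hsd, sum_singleton]

lemma inc_sq {K : Finset V} {a : V} (ha : a ∉ K) :
    inc (insert a K) K * inc (insert a K) K = 1 := by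
  rw [inc_insert ha, ← mul_pow]; norm_num

lemma inc_insert_insert {K : Finset V} {a b : V} (ha : a ∉ K) (hb : b ∉ K) (hab : a ≠ b) :
    inc (insert b (insert a K)) (insert a K)
      = (-1 : ℝ) ^ ((K.filter (fun y => y < b)).card + if a < b then 1 else 0) := by
  have hb' : b ∉ insert a K := by simp [hab.symm, hb, mem_insert]
  rw [inc_insert hb', filter_insert]
  by_cases h : a < b
  · rw [if_pos h, if_pos h, card_insert_of_notMem (fun hm => ha (mem_filter.mp hm).1)]
  · rw [if_neg h, if_neg h, add_zero]

lemma sign_mul {K : Finset V} {a b : V} (ha : a ∉ K) (hb : b ∉ K) (hab : a ≠ b) :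
    inc (insert b (insert a K)) (insert a K) * inc (insert a (insert b K)) (insert b K)
      = -(inc (insert a K) K * inc (insert b K) K) := by
  rw [inc_insert_insert ha hb hab, inc_insert_insert hb ha hab.symm, inc_insert ha, inc_insert hb]
  rcases hab.lt_or_gt with h | h
  · rw [if_pos h, if_neg (not_lt_of_gt h)]
    rw [add_zero, pow_add]
    ring
  · rw [if_neg (not_lt_of_gt h), if_pos h]
    rw [add_zero, pow_add]
    ring

lemma sign_add {K : Finset V} {a b : V} (ha : a ∉ K) (hb : b ∉ K) (hab : a ≠ b) :
    inc (insert b (insert a K)) (insert a K) * inc (insert a K) K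
      + inc (insert a (insert b K)) (insert b K) * inc (insert b K) K = 0 := by
  rw [inc_insert_insert ha hb hab, inc_insert_insert hb ha hab.symm, inc_insert ha, inc_insert hb]
  rcases hab.lt_or_gt with h | h
  · rw [if_pos h, if_neg (not_lt_of_gt h), add_zero, pow_add]
    ring
  · rw [if_neg (not_lt_of_gt h), if_pos h, add_zero, pow_add]
    ring

lemma eq_insert_of {K F : Finset V} (hKF : K ⊆ F) (hc : F.card = K.card + 1) :
    ∃ x, x ∉ K ∧ F = insert x K := by
  have h1 : (F \ K).card = 1 := by rw [card_sdiff_of_subset hKF]; omega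
  obtain ⟨x, hx⟩ := card_eq_one.mp h1
  have hxm : x ∈ F \ K := hx ▸ mem_singleton_self x
  obtain ⟨hxF, hxK⟩ := mem_sdiff.mp hxm
  refine ⟨x, hxK, ?_⟩
  refine (eq_of_subset_of_card_le (insert_subset hxF hKF) ?_).symm
  rw [card_insert_of_notMem hxK]; omega



/-- If `F ≠ F'` have the same card then the intersection is strictly smaller. -/
lemma inter_card_lt {F F' : Finset V} {k : ℕ} (hF : F.card = k) (hF' : F'.card = k)
    (hne : F ≠ F') : (F ∩ F').card < k := by
  rcases lt_or_eq_of_le (le_trans (card_le_card (inter_subset_left : F ∩ F' ⊆ F)) hF.le)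
    with h | h
  · exact h
  · exfalso
    have h1 : F ∩ F' = F := eq_of_subset_of_card_le inter_subset_left (by omega)
    have h2 : F ⊆ F' := by rw [← h1]; exact inter_subset_right
    exact hne (eq_of_subset_of_card_le h2 (by omega))

lemma eps_eq_zero {F F' : Finset V} {k : ℕ} (hF : F.card = k) (hF' : F'.card = k)
    (hu : (F ∪ F').card ≠ k + 1) : eps F F' = 0 := by
  have hc := Finset.card_inter_add_card_union F F'
  have : inc F (F ∩ F') = 0 := by
    apply inc_of_not
    rintro ⟨-, h2⟩
    omega
  rw [eps, this, zero_mul]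

lemma union_card_eq_k {F F' : Finset V} {k : ℕ} (hF : F.card = k) (hF' : F'.card = k)
    (hu : (F ∪ F').card = k) : F = F' := by
  have h1 : F = F ∪ F' := eq_of_subset_of_card_le subset_union_left (by omega)
  have h2 : F' = F ∪ F' := eq_of_subset_of_card_le subset_union_right (by omega)
  exact h1.trans h2.symm

lemma union_card_ge {F F' : Finset V} {k : ℕ} (hF : F.card = k) (hF' : F'.card = k)
    (hne : F ≠ F') : k + 1 ≤ (F ∪ F').card := by
  have h1 : k ≤ (F ∪ F').card := hF ▸ card_le_card subset_union_left
  rcases lt_or_eq_of_le h1 with h | h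
  · omega
  · exact absurd (union_card_eq_k hF hF' h.symm) hne

/-- Structure of a pair of `k`-sets whose union has `k+1` elements. -/
lemma union_structure {F F' : Finset V} {k : ℕ} (hF : F.card = k) (hF' : F'.card = k)
    (hu : (F ∪ F').card = k + 1) :
    ∃ K a b, a ∉ K ∧ b ∉ K ∧ a ≠ b ∧ F = insert a K ∧ F' = insert b K ∧ K = F ∩ F' ∧
      F ∪ F' = insert b (insert a K) ∧ F ∪ F' = insert a (insert b K) := by
  have hc := Finset.card_inter_add_card_union F F'
  have hne : F ≠ F' := by
    rintro rfl; rw [union_self] at hu; omega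
  have hKc : (F ∩ F').card + 1 = k := by omega
  obtain ⟨a, haK, hFa⟩ := eq_insert_of (inter_subset_left : F ∩ F' ⊆ F) (by omega)
  obtain ⟨b, hbK, hFb⟩ := eq_insert_of (inter_subset_right : F ∩ F' ⊆ F') (by omega)
  have hab : a ≠ b := by
    rintro rfl; exact hne (hFa.trans hFb.symm)
  obtain ⟨K, hK⟩ : ∃ K, K = F ∩ F' := ⟨_, rfl⟩
  rw [← hK] at haK hFa hbK hFb
  refine ⟨K, a, b, haK, hbK, hab, hFa, hFb, hK, ?_, ?_⟩
  · rw [hFa, hFb]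
    ext x
    simp only [mem_union, mem_insert]
    tauto
  · rw [hFa, hFb]
    ext x
    simp only [mem_union, mem_insert]
    tauto

lemma eps_sq {F F' : Finset V} {k : ℕ} (hF : F.card = k) (hF' : F'.card = k)
    (hu : (F ∪ F').card = k + 1) : eps F F' * eps F F' = 1 := by
  obtain ⟨K, a, b, ha, hb, hab, hFa, hFb, hK, -, -⟩ := union_structure hF hF' hu
  rw [eps, ← hK, hFa, hFb]
  have h1 := inc_sq ha (a := a)
  have h2 := inc_sq hb (a := b)
  nlinarith [h1, h2]

def Mmat (V : Type) [Fintype V] [DecidableEq V] [LinearOrder V] (k : ℕ) :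
    Matrix (KSet V k) (KSet V (k - 1)) ℝ := fun F K => inc F.1 K.1

def Nmat (V : Type) [Fintype V] [DecidableEq V] [LinearOrder V] (k : ℕ) :
    Matrix (KSet V (k + 1)) (KSet V k) ℝ := fun H F => inc H.1 F.1

lemma sum_kset {m : ℕ} (f : Finset V → ℝ) :
    ∑ K : KSet V m, f K.1 = ∑ K ∈ univ.filter (fun K : Finset V => K.card = m), f K :=
  (Finset.sum_subtype _ (by simp) f).symm

lemma choose_pred {k : ℕ} (hk : 1 ≤ k) : k.choose (k - 1) = k := by
  have := Nat.choose_symm (n := k) (k := 1) hk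
  rw [this, Nat.choose_one_right]

lemma count_subsets {F : Finset V} {k : ℕ} (hk : 1 ≤ k) (hF : F.card = k) :
    (univ.filter fun K : Finset V => K.card = k - 1 ∧ K ⊆ F).card = k := by
  have h : univ.filter (fun K : Finset V => K.card = k - 1 ∧ K ⊆ F)
      = F.powersetCard (k - 1) := by
    ext K
    simp only [mem_filter, mem_univ, true_and, mem_powersetCard]
    tauto
  rw [h, card_powersetCard, hF, choose_pred hk]

lemma count_supersets {F : Finset V} {k : ℕ} (hF : F.card = k) :
    (univ.filter fun H : Finset V => H.card = k + 1 ∧ F ⊆ H).card = Fintype.card V - k := by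
  have himg : univ.filter (fun H : Finset V => H.card = k + 1 ∧ F ⊆ H)
      = Fᶜ.image (fun b => insert b F) := by
    ext H
    simp only [mem_filter, mem_univ, true_and, mem_image, mem_compl]
    constructor
    · rintro ⟨h1, h2⟩
      obtain ⟨x, hx, hxF⟩ := eq_insert_of h2 (by omega)
      exact ⟨x, hx, hxF.symm⟩
    · rintro ⟨b, hb, rfl⟩
      exact ⟨by rw [card_insert_of_notMem hb, hF], subset_insert _ _⟩
  rw [himg, card_image_of_injOn, card_compl, hF]
  intro x hx y hy hxy
  simp only [coe_compl, Set.mem_compl_iff, mem_coe] at hx hy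
  have hxy' : insert x F = insert y F := hxy
  have hmem : x ∈ insert y F := hxy' ▸ mem_insert_self x F
  rcases mem_insert.mp hmem with h | h
  · exact h
  · exact absurd h hx

lemma Lc_eq_MMt {k : ℕ} (hk : 1 ≤ k) : Lc V k = Mmat V k * (Mmat V k)ᵀ := by
  ext F F'
  rw [Matrix.mul_apply]
  simp only [transpose_apply, Mmat]
  rw [sum_kset (fun K => inc F.1 K * inc F'.1 K)]
  by_cases h : F = F'
  · subst h
    have hterm : ∀ K ∈ univ.filter (fun K : Finset V => K.card = k - 1),
        inc F.1 K * inc F.1 K = if K ⊆ F.1 then 1 else 0 := by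
      intro K hK
      rw [mem_filter] at hK
      by_cases hs : K ⊆ F.1
      · obtain ⟨x, hx, hxF⟩ := eq_insert_of hs (by rw [F.2, hK.2]; omega)
        rw [if_pos hs, hxF, inc_sq hx]
      · rw [if_neg hs, inc_of_not (fun hc => hs hc.1), zero_mul]
    rw [Finset.sum_congr rfl hterm, Finset.sum_boole, Finset.filter_filter,
      count_subsets hk F.2]
    simp [Lc]
  · have hne : F.1 ≠ F'.1 := fun he => h (Subtype.ext he)
    have hlt := inter_card_lt F.2 F'.2 hne
    simp only [Lc, if_neg h]
    by_cases hc : (F.1 ∩ F'.1).card = k - 1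
    · rw [eq_comm]
      rw [Finset.sum_eq_single_of_mem (F.1 ∩ F'.1) (by simp [hc])]
      · rw [eps]
      intro K hK hKne
      rw [mem_filter] at hK
      by_cases h1 : K ⊆ F.1
      · by_cases h2 : K ⊆ F'.1
        · exfalso
          apply hKne
          apply eq_of_subset_of_card_le (subset_inter h1 h2)
          rw [hK.2, hc]
        · rw [inc_of_not (fun hcc => h2 hcc.1), mul_zero]
      · rw [inc_of_not (fun hcc => h1 hcc.1), zero_mul]
    · rw [eq_comm]
      have heps : eps F.1 F'.1 = 0 := by
        rw [eps, inc_of_not, zero_mul]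
        rintro ⟨-, hcc⟩
        rw [F.2] at hcc
        omega
      rw [heps]
      apply Finset.sum_eq_zero
      intro K hK
      rw [mem_filter] at hK
      by_cases h1 : K ⊆ F.1
      · by_cases h2 : K ⊆ F'.1
        · exfalso
          have := card_le_card (subset_inter h1 h2)
          omega
        · rw [inc_of_not (fun hcc => h2 hcc.1), mul_zero]
      · rw [inc_of_not (fun hcc => h1 hcc.1), zero_mul]

lemma NtN_apply {k : ℕ} (F F' : KSet V k) :
    ((Nmat V k)ᵀ * Nmat V k) F F'
      = if F = F' then ((Fintype.card V - k : ℕ) : ℝ) else - eps F.1 F'.1 := by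
  rw [Matrix.mul_apply]
  simp only [transpose_apply, Nmat]
  rw [sum_kset (m := k + 1) (fun H => inc H F.1 * inc H F'.1)]
  by_cases h : F = F'
  · subst h
    rw [if_pos rfl]
    have hterm : ∀ H ∈ univ.filter (fun H : Finset V => H.card = k + 1),
        inc H F.1 * inc H F.1 = if F.1 ⊆ H then 1 else 0 := by
      intro H hH
      rw [mem_filter] at hH
      by_cases hs : F.1 ⊆ H
      · obtain ⟨x, hx, hxF⟩ := eq_insert_of hs (by rw [F.2, hH.2])
        rw [if_pos hs, hxF, inc_sq hx]
      · rw [if_neg hs, inc_of_not (fun hc => hs hc.1), zero_mul]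
    rw [Finset.sum_congr rfl hterm, Finset.sum_boole, Finset.filter_filter,
      count_supersets F.2]
  · have hne : F.1 ≠ F'.1 := fun he => h (Subtype.ext he)
    rw [if_neg h]
    by_cases hu : (F.1 ∪ F'.1).card = k + 1
    · obtain ⟨K, a, b, ha, hb, hab, hFa, hFb, hK, hu1, hu2⟩ := union_structure F.2 F'.2 hu
      rw [Finset.sum_eq_single_of_mem (F.1 ∪ F'.1) (by simp [hu])]
      · have : eps F.1 F'.1 = inc (insert a K) K * inc (insert b K) K := by
          rw [eps, ← hK, hFa, hFb]
        have e1 : inc (F.1 ∪ F'.1) F.1 = inc (insert b (insert a K)) (insert a K) := by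
          rw [hu1, hFa]
        have e2 : inc (F.1 ∪ F'.1) F'.1 = inc (insert a (insert b K)) (insert b K) := by
          rw [hu2, hFb]
        rw [e1, e2, this]
        exact sign_mul ha hb hab
      · intro H hH hHne
        rw [mem_filter] at hH
        by_cases h1 : F.1 ⊆ H
        · by_cases h2 : F'.1 ⊆ H
          · exfalso
            apply hHne
            apply (eq_of_subset_of_card_le (union_subset h1 h2) (by omega)).symm
          · rw [inc_of_not (fun hcc => h2 hcc.1), mul_zero]
        · rw [inc_of_not (fun hcc => h1 hcc.1), zero_mul]
    · rw [eps_eq_zero F.2 F'.2 hu, neg_zero]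
      apply Finset.sum_eq_zero
      intro H hH
      rw [mem_filter] at hH
      have hge := union_card_ge F.2 F'.2 hne
      by_cases h1 : F.1 ⊆ H
      · by_cases h2 : F'.1 ⊆ H
        · exfalso
          have := card_le_card (union_subset h1 h2)
          omega
        · rw [inc_of_not (fun hcc => h2 hcc.1), mul_zero]
      · rw [inc_of_not (fun hcc => h1 hcc.1), zero_mul]

lemma Lc_add_NtN {k : ℕ} (hkn : k ≤ Fintype.card V) :
    Lc V k + (Nmat V k)ᵀ * Nmat V k = (Fintype.card V : ℝ) • 1 := by
  ext F F'
  rw [Matrix.add_apply, NtN_apply]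
  by_cases h : F = F'
  · subst h
    have h1 : Lc V k F F = (k : ℝ) := by simp [Lc]
    rw [h1, if_pos rfl, Matrix.smul_apply, Matrix.one_apply_eq, Nat.cast_sub hkn,
      smul_eq_mul, mul_one]
    ring
  · have h1 : Lc V k F F' = eps F.1 F'.1 := by simp [Lc, h]
    rw [h1, if_neg h, Matrix.smul_apply, Matrix.one_apply_ne h, smul_eq_mul, mul_zero]
    ring

lemma NM_zero {k : ℕ} (hk : 1 ≤ k) : Nmat V k * Mmat V k = 0 := by
  ext H K
  rw [Matrix.mul_apply]
  simp only [Nmat, Mmat, Matrix.zero_apply]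
  rw [sum_kset (m := k) (fun F => inc H.1 F * inc F K.1)]
  by_cases hKH : K.1 ⊆ H.1
  · have hcd : (H.1 \ K.1).card = 2 := by
      rw [card_sdiff_of_subset hKH, H.2, K.2]; omega
    obtain ⟨a, b, hab, hpair⟩ := card_eq_two.mp hcd
    have haH : a ∈ H.1 \ K.1 := by rw [hpair]; simp
    have hbH : b ∈ H.1 \ K.1 := by rw [hpair]; simp
    have haK : a ∉ K.1 := (mem_sdiff.mp haH).2
    have hbK : b ∉ K.1 := (mem_sdiff.mp hbH).2
    have hFa : (insert a K.1).card = k := by rw [card_insert_of_notMem haK, K.2]; omega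
    have hFb : (insert b K.1).card = k := by rw [card_insert_of_notMem hbK, K.2]; omega
    have hne : insert a K.1 ≠ insert b K.1 := by
      intro he
      have : a ∈ insert b K.1 := he ▸ mem_insert_self a K.1
      rcases mem_insert.mp this with h | h
      · exact hab h
      · exact haK h
    have hHab : H.1 = insert b (insert a K.1) := by
      apply (eq_of_subset_of_card_le _ _).symm
      · apply insert_subset (mem_sdiff.mp hbH).1
        exact insert_subset (mem_sdiff.mp haH).1 hKH
      · rw [H.2, card_insert_of_notMem, hFa]
        intro hmem
        rcases mem_insert.mp hmem with h | h
        · exact hab h.symm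
        · exact hbK h
    have e3 : insert b (insert a K.1) = insert a (insert b K.1) := by
      ext x; simp only [mem_insert]; tauto
    have hsub : ({insert a K.1, insert b K.1} : Finset (Finset V))
        ⊆ univ.filter (fun F : Finset V => F.card = k) := by
      intro x hx
      rcases mem_insert.mp hx with h | h
      · subst h; simp [hFa]
      · rw [mem_singleton.mp h]; simp [hFb]
    rw [← Finset.sum_subset hsub]
    · rw [Finset.sum_pair hne, hHab]
      nth_rewrite 2 [e3]
      exact sign_add haK hbK hab
    · intro F hF hFnot
      rw [mem_filter] at hF
      by_cases h1 : F ⊆ H.1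
      · by_cases h2 : K.1 ⊆ F
        · exfalso
          obtain ⟨x, hx, hxF⟩ := eq_insert_of h2 (by rw [hF.2, K.2]; omega)
          have hxH : x ∈ H.1 \ K.1 := by
            rw [mem_sdiff]
            exact ⟨h1 (hxF ▸ mem_insert_self x K.1), hx⟩
          rw [hpair] at hxH
          rcases mem_insert.mp hxH with h | h
          · subst h; exact hFnot (hxF ▸ mem_insert_self _ _)
          · rw [mem_singleton.mp h] at hxF
            exact hFnot (hxF ▸ mem_insert_of_mem (mem_singleton_self _))
        · rw [inc_of_not (fun hcc => h2 hcc.1), mul_zero]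
      · rw [inc_of_not (fun hcc => h1 hcc.1), zero_mul]
  · apply Finset.sum_eq_zero
    intro F hF
    by_cases h1 : F ⊆ H.1
    · by_cases h2 : K.1 ⊆ F
      · exact absurd (h2.trans h1) hKH
      · rw [inc_of_not (fun hcc => h2 hcc.1), mul_zero]
    · rw [inc_of_not (fun hcc => h1 hcc.1), zero_mul]

lemma conjT_real {m n : Type} (A : Matrix m n ℝ) : Aᴴ = Aᵀ := by
  ext i j
  simp [conjTranspose_apply]

lemma psd_smul {ι : Type} [Fintype ι] {A : Matrix ι ι ℝ} (hA : A.PosSemidef) {c : ℝ}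
    (hc : 0 ≤ c) : (c • A).PosSemidef := by
  refine Matrix.PosSemidef.of_dotProduct_mulVec_nonneg ?_ ?_
  · unfold Matrix.IsHermitian
    rw [conjTranspose_smul, hA.1]
    congr 1
  · intro x
    rw [Matrix.smul_mulVec, dotProduct_smul, smul_eq_mul]
    exact mul_nonneg hc (hA.dotProduct_mulVec_nonneg x)

lemma trace_nonneg_psd {ι : Type} [Fintype ι] [DecidableEq ι] {A : Matrix ι ι ℝ}
    (hA : A.PosSemidef) : 0 ≤ A.trace := by
  rw [Matrix.trace]
  apply Finset.sum_nonneg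
  intro i _
  have h := hA.dotProduct_mulVec_nonneg (Pi.single i 1)
  simpa [dotProduct, mulVec, Pi.single_apply, Matrix.diag] using h

lemma trace_mul_psd_nonneg {ι κ : Type} [Fintype ι] [Fintype κ] [DecidableEq ι] [DecidableEq κ]
    {Y : Matrix ι ι ℝ} (hY : Y.PosSemidef) (N : Matrix κ ι ℝ) :
    0 ≤ Matrix.trace (Nᵀ * N * Y) := by
  have h1 : Nᵀ * N * Y = Nᵀ * (N * Y) := Matrix.mul_assoc _ _ _
  rw [h1, Matrix.trace_mul_comm, Matrix.mul_assoc]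
  have h2 : (N * Y * Nᵀ).PosSemidef := by
    have := hY.mul_mul_conjTranspose_same N
    rwa [conjT_real] at this
  rw [← Matrix.mul_assoc]
  exact trace_nonneg_psd h2



lemma Lc_psd {k : ℕ} (hk : 1 ≤ k) : (Lc V k).PosSemidef := by
  rw [Lc_eq_MMt hk, ← conjT_real]
  exact Matrix.posSemidef_self_mul_conjTranspose _

lemma trace_Lc {k : ℕ} :
    (Lc V k).trace = (k : ℝ) * (Fintype.card (KSet V k) : ℝ) := by
  rw [Matrix.trace]
  have h : ∀ F : KSet V k, (Lc V k).diag F = (k : ℝ) := fun F => by simp [Lc, Matrix.diag]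
  rw [Finset.sum_congr rfl (fun F _ => h F), Finset.sum_const, Finset.card_univ,
    nsmul_eq_mul, mul_comm]

lemma Lc_eq_sub {k : ℕ} (hkn : k ≤ Fintype.card V) :
    Lc V k = (Fintype.card V : ℝ) • 1 - (Nmat V k)ᵀ * Nmat V k :=
  eq_sub_of_add_eq (Lc_add_NtN hkn)

lemma trace_Lc_mul_le {k : ℕ} (hkn : k ≤ Fintype.card V) {Y : Matrix (KSet V k) (KSet V k) ℝ}
    (hY : Y.PosSemidef) (htr : Y.trace = 1) :
    Matrix.trace (Lc V k * Y) ≤ (Fintype.card V : ℝ) := by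
  rw [Lc_eq_sub hkn, Matrix.sub_mul, Matrix.trace_sub, Matrix.smul_mul, Matrix.one_mul,
    Matrix.trace_smul, htr]
  have h := trace_mul_psd_nonneg hY (Nmat V k)
  simp only [smul_eq_mul, mul_one]
  linarith

lemma trace_Lc_sq {k : ℕ} (hk : 1 ≤ k) (hkn : k ≤ Fintype.card V) :
    Matrix.trace (Lc V k * Lc V k)
      = (Fintype.card V : ℝ) * ((k : ℝ) * (Fintype.card (KSet V k) : ℝ)) := by
  have h0 : Matrix.trace (Lc V k * ((Nmat V k)ᵀ * Nmat V k)) = 0 := by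
    rw [Lc_eq_MMt hk]
    have h1 : Mmat V k * (Mmat V k)ᵀ * ((Nmat V k)ᵀ * Nmat V k)
        = Mmat V k * ((Mmat V k)ᵀ * ((Nmat V k)ᵀ * Nmat V k)) := by
      simp only [Matrix.mul_assoc]
    rw [h1, Matrix.trace_mul_comm]
    have h2 : (Mmat V k)ᵀ * ((Nmat V k)ᵀ * Nmat V k) * Mmat V k
        = (Nmat V k * Mmat V k)ᵀ * (Nmat V k * Mmat V k) := by
      rw [Matrix.transpose_mul]
      simp only [Matrix.mul_assoc]
    rw [h2, NM_zero hk]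
    simp
  nth_rewrite 2 [Lc_eq_sub hkn]
  rw [Matrix.mul_sub, Matrix.trace_sub, Matrix.mul_smul, Matrix.mul_one, Matrix.trace_smul,
    h0, trace_Lc]
  simp only [smul_eq_mul, sub_zero]

variable {V : Type} [Fintype V] [DecidableEq V] [LinearOrder V]

lemma kset_card_pos {k : ℕ} (hkn : k ≤ Fintype.card V) :
    0 < Fintype.card (KSet V k) := by
  rw [Fintype.card_pos_iff]
  obtain ⟨S, -, hS⟩ := Finset.exists_subset_card_eq
    (show k ≤ (univ : Finset V).card by rw [card_univ]; exact hkn)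
  exact ⟨⟨S, hS⟩⟩

lemma dfaces_empty (m : ℕ) : (emptyComplex V).dfaces m = ∅ := by
  simp [emptyComplex, SC.dfaces]

lemma mem_dfaces_complete {k : ℕ} {H : Finset V} :
    H ∈ (completeComplex V k).dfaces (k + 1) ↔ H.card = k + 1 := by
  simp only [completeComplex, SC.dfaces, mem_filter, mem_univ, true_and]
  constructor
  · rintro ⟨-, h⟩; exact h
  · intro h; exact ⟨le_of_eq h, h⟩

lemma empty_feasible {k : ℕ} (hk : 1 ≤ k) (hkn : k ≤ Fintype.card V) :
    thetaFeasible (emptyComplex V) k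
      (((k : ℝ) * (Fintype.card (KSet V k) : ℝ))⁻¹ • Lc V k) ∧
    Matrix.trace (Lc V k * (((k : ℝ) * (Fintype.card (KSet V k) : ℝ))⁻¹ • Lc V k))
      = (Fintype.card V : ℝ) := by
  have hN := kset_card_pos (V := V) (k := k) hkn
  have hcN : (0 : ℝ) < (k : ℝ) * (Fintype.card (KSet V k) : ℝ) := by
    apply mul_pos
    · exact_mod_cast hk
    · exact_mod_cast hN
  constructor
  · refine ⟨psd_smul (Lc_psd hk) (inv_nonneg.mpr hcN.le), ?_, ?_, ?_, ?_⟩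
    · rw [Matrix.trace_smul, trace_Lc, smul_eq_mul, inv_mul_cancel₀ hcN.ne']
    · intro F F' hmem
      rw [dfaces_empty] at hmem
      exact absurd hmem (notMem_empty _)
    · intro F F' hcard
      have hne : F ≠ F' := by
        rintro rfl
        rw [union_self, F.2] at hcard
        omega
      have h1 : Lc V k F F' = eps F.1 F'.1 := by simp [Lc, hne]
      have h2 : eps F.1 F'.1 = 0 := eps_eq_zero F.2 F'.2 (by omega)
      rw [Matrix.smul_apply, h1, h2, smul_zero]
    · intro F F' G G' hU
      by_cases hu : (F.1 ∪ F'.1).card = k + 1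
      · have hu' : (G.1 ∪ G'.1).card = k + 1 := by rw [← hU]; exact hu
        have hne : F ≠ F' := by rintro rfl; rw [union_self, F.2] at hu; omega
        have hne' : G ≠ G' := by rintro rfl; rw [union_self, G.2] at hu'; omega
        have h1 : Lc V k F F' = eps F.1 F'.1 := by simp [Lc, hne]
        have h1' : Lc V k G G' = eps G.1 G'.1 := by simp [Lc, hne']
        rw [Matrix.smul_apply, Matrix.smul_apply, h1, h1', smul_eq_mul, smul_eq_mul,
          mul_left_comm, eps_sq F.2 F'.2 hu, mul_left_comm, eps_sq G.2 G'.2 hu']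
      · have h2 : eps F.1 F'.1 = 0 := eps_eq_zero F.2 F'.2 hu
        have h2' : eps G.1 G'.1 = 0 := eps_eq_zero G.2 G'.2 (by rw [← hU]; exact hu)
        rw [h2, h2', zero_mul, zero_mul]
  · rw [Matrix.mul_smul, Matrix.trace_smul, trace_Lc_sq hk hkn, smul_eq_mul,
      mul_comm (Fintype.card V : ℝ), ← mul_assoc, inv_mul_cancel₀ hcN.ne', one_mul]

lemma theta_empty_eq {k : ℕ} (hk : 1 ≤ k) (hkn : k ≤ Fintype.card V) :
    theta (emptyComplex V) k = (Fintype.card V : ℝ) := by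
  obtain ⟨hfeas, hval⟩ := empty_feasible (V := V) hk hkn
  unfold theta
  have hmem : (Fintype.card V : ℝ) ∈ {t | ∃ Y, thetaFeasible (emptyComplex V) k Y ∧
      Matrix.trace (Lc V k * Y) = t} := ⟨_, hfeas, hval⟩
  apply le_antisymm
  · refine csSup_le ⟨_, hmem⟩ ?_
    rintro t ⟨Y, hY, rfl⟩
    exact trace_Lc_mul_le hkn hY.1 hY.2.1
  · apply le_csSup
    · refine ⟨(Fintype.card V : ℝ), ?_⟩
      rintro t ⟨Y, hY, rfl⟩
      exact trace_Lc_mul_le hkn hY.1 hY.2.1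
    · exact hmem

lemma complete_value {k : ℕ} {Y : Matrix (KSet V k) (KSet V k) ℝ}
    (hY : thetaFeasible (completeComplex V k) k Y) :
    Matrix.trace (Lc V k * Y) = (k : ℝ) := by
  obtain ⟨hpsd, htr, h3, h4, -⟩ := hY
  have hdiag : ∀ F : KSet V k, (Lc V k * Y) F F = (k : ℝ) * Y F F := by
    intro F
    rw [Matrix.mul_apply]
    rw [Finset.sum_eq_single F]
    · simp [Lc]
    · intro F' _ hne
      have hne' : F'.1 ≠ F.1 := fun he => hne (Subtype.ext he)
      have hge := union_card_ge F'.2 F.2 hne'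
      rcases eq_or_lt_of_le hge with h | h
      · have hmem : F'.1 ∪ F.1 ∈ (completeComplex V k).dfaces (k + 1) :=
          mem_dfaces_complete.mpr h.symm
        rw [h3 F' F hmem, mul_zero]
      · rw [h4 F' F (by omega), mul_zero]
    · intro h; exact absurd (mem_univ F) h
  rw [Matrix.trace] at htr ⊢
  simp only [Matrix.diag_apply] at htr ⊢
  rw [Finset.sum_congr rfl (fun F _ => hdiag F), ← Finset.mul_sum, htr, mul_one]

lemma complete_feasible {k : ℕ} (hkn : k ≤ Fintype.card V) :
    thetaFeasible (completeComplex V k) k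
      ((Fintype.card (KSet V k) : ℝ)⁻¹ • (1 : Matrix (KSet V k) (KSet V k) ℝ)) := by
  have hN := kset_card_pos (V := V) (k := k) hkn
  have hN' : (0 : ℝ) < (Fintype.card (KSet V k) : ℝ) := by exact_mod_cast hN
  refine ⟨psd_smul Matrix.PosSemidef.one (inv_nonneg.mpr hN'.le), ?_, ?_, ?_, ?_⟩
  · rw [Matrix.trace_smul, Matrix.trace_one, smul_eq_mul, inv_mul_cancel₀ hN'.ne']
  · intro F F' hmem
    have hc := mem_dfaces_complete.mp hmem
    have hne : F ≠ F' := by rintro rfl; rw [union_self, F.2] at hc; omega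
    rw [Matrix.smul_apply, Matrix.one_apply_ne hne, smul_zero]
  · intro F F' hc
    have hne : F ≠ F' := by rintro rfl; rw [union_self, F.2] at hc; omega
    rw [Matrix.smul_apply, Matrix.one_apply_ne hne, smul_zero]
  · intro F F' G G' hU
    by_cases hne : F = F'
    · subst hne
      rw [union_self] at hU
      have hG : G = G' := by
        apply Subtype.ext
        exact union_card_eq_k G.2 G'.2 (by rw [← hU]; exact F.2)
      subst hG
      rw [union_self] at hU
      have hFG : F = G := Subtype.ext hU
      subst hFG
      rfl
    · have hge := union_card_ge F.2 F'.2 (fun he => hne (Subtype.ext he))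
      have hne' : G ≠ G' := by
        rintro rfl
        rw [union_self] at hU
        rw [hU, G.2] at hge
        omega
      rw [Matrix.smul_apply, Matrix.smul_apply, Matrix.one_apply_ne hne,
        Matrix.one_apply_ne hne', smul_zero, mul_zero, mul_zero]

lemma theta_complete_eq {k : ℕ} (hkn : k ≤ Fintype.card V) :
    theta (completeComplex V k) k = (k : ℝ) := by
  unfold theta
  have hset : {t | ∃ Y, thetaFeasible (completeComplex V k) k Y ∧
      Matrix.trace (Lc V k * Y) = t} = {(k : ℝ)} := by
    ext t
    simp only [Set.mem_setOf_eq, Set.mem_singleton_iff]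
    constructor
    · rintro ⟨Y, hY, rfl⟩
      exact complete_value hY
    · rintro rfl
      exact ⟨_, complete_feasible hkn, complete_value (complete_feasible hkn)⟩
  rw [hset, csSup_singleton]

lemma alpha_empty {k : ℕ} : alphaNum (emptyComplex V) k = Fintype.card V := by
  unfold alphaNum
  have hset : {m | ∃ S : Finset V, (emptyComplex V).IsIndep k S ∧ S.card = m}
      = Set.Iic (Fintype.card V) := by
    ext m
    simp only [Set.mem_setOf_eq, Set.mem_Iic]
    constructor
    · rintro ⟨S, -, rfl⟩
      rw [← card_univ]
      exact card_le_card (subset_univ S)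
    · intro hm
      obtain ⟨S, -, hS⟩ := Finset.exists_subset_card_eq
        (show m ≤ (univ : Finset V).card by rw [card_univ]; exact hm)
      refine ⟨S, ?_, hS⟩
      intro H hH
      rw [dfaces_empty] at hH
      exact absurd hH (notMem_empty _)
  rw [hset, csSup_Iic]

lemma alpha_complete {k : ℕ} (hkn : k ≤ Fintype.card V) :
    alphaNum (completeComplex V k) k = k := by
  unfold alphaNum
  have hset : {m | ∃ S : Finset V, (completeComplex V k).IsIndep k S ∧ S.card = m}
      = Set.Iic k := by
    ext m
    simp only [Set.mem_setOf_eq, Set.mem_Iic]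
    constructor
    · rintro ⟨S, hind, rfl⟩
      by_contra h
      push_neg at h
      obtain ⟨H, hHS, hHc⟩ := Finset.exists_subset_card_eq (show k + 1 ≤ S.card by omega)
      exact hind H (mem_dfaces_complete.mpr hHc) hHS
    · intro hm
      obtain ⟨S, -, hS⟩ := Finset.exists_subset_card_eq
        (show m ≤ (univ : Finset V).card by rw [card_univ]; omega)
      refine ⟨S, ?_, hS⟩
      intro H hH hsub
      have hle := card_le_card hsub
      rw [mem_dfaces_complete.mp hH, hS] at hle
      omega
  rw [hset, csSup_Iic]

end ThetaAux

/-- The empty pure `k`-complex `X` on `n` vertices has `ϑ_k(X) = n`,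
and the complete `k`-complex `K_n^k` has `ϑ_k(K_n^k) = k`; in both cases
`ϑ_k(X) = α(X)`. -/
theorem theta_empty_and_complete
    (V : Type) [Fintype V] [DecidableEq V] [LinearOrder V] (k : ℕ)
    (hk : 1 ≤ k) (hkn : k ≤ Fintype.card V) :
    theta (emptyComplex V) k = (Fintype.card V : ℝ) ∧
    alphaNum (emptyComplex V) k = Fintype.card V ∧
    theta (completeComplex V k) k = (k : ℝ) ∧
    alphaNum (completeComplex V k) k = k :=
  ⟨ThetaAux.theta_empty_eq hk hkn, ThetaAux.alpha_empty,
    ThetaAux.theta_complete_eq hkn, ThetaAux.alpha_complete hkn⟩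
end
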